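/- Meshulam–Wallach expansion bound over an arbitrary abelian group. Let j ≥ 1, let n ≥ j+2, and let Δ be the complete complex on [n], i.e. the family of all non-empty subsets of [n] (the downward closure of the (n−1)-simplex). Let f be a j-cochain of Δ with support S, and suppose that for every (j−1)-cochain g of Δ, the support of f + δ^{j−1}g has cardinality at least |S|. Then |D(f)| ≥ (n/(j+2))·|S|, where D(f) denotes the support of δ^j f, i.e. the set of unordered (j+1)-simplices of Δ on which δ^j f is non-zero. -/
import Mathlib


open MeasureTheory Filter Finset Asymptotics
open scoped Classical

noncomputable section

namespace RSC

/-! ### Simplicial complexes on the vertex set `Fin N` -/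

variable {N : ℕ}

/-- A simplicial complex on `[N]`: a downward-closed family of non-empty finite
subsets of the vertex set containing all singletons. -/
def IsComplex (G : Set (Finset (Fin N))) : Prop :=
  (∀ A ∈ G, A.Nonempty) ∧ (∀ v : Fin N, ({v} : Finset (Fin N)) ∈ G) ∧
    ∀ A ∈ G, ∀ B : Finset (Fin N), B ⊆ A → B.Nonempty → B ∈ G

/-- A `d`-dimensional simplicial complex: no `(d+1)`-simplices, i.e. all faces have
at most `d+1` vertices. -/
def IsDComplex (d : ℕ) (G : Set (Finset (Fin N))) : Prop :=
  IsComplex G ∧ ∀ A ∈ G, A.card ≤ d + 1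

/-- `σ` is an ordered simplex of `G` (on `m` vertices, i.e. of dimension `m-1`). -/
def OrdSimp (G : Set (Finset (Fin N))) {m : ℕ} (σ : Fin m → Fin N) : Prop :=
  Function.Injective σ ∧ Finset.image σ Finset.univ ∈ G

/-- An `(m-1)`-dimensional cochain of `G` with coefficients in `R`: a function on
ordered `m`-tuples vanishing off the ordered simplices of `G` and changing sign
under transpositions of two vertices. -/
def IsCochain (G : Set (Finset (Fin N))) (m : ℕ) {R : Type} [AddCommGroup R]
    (f : (Fin m → Fin N) → R) : Prop :=
  (∀ σ : Fin m → Fin N, ¬ OrdSimp G σ → f σ = 0) ∧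
    ∀ (σ : Fin m → Fin N) (a b : Fin m), a ≠ b → f (σ ∘ Equiv.swap a b) = - f σ

/-- The coboundary of a function on ordered `m`-tuples. -/
def delta {R : Type} [AddCommGroup R] {m : ℕ} (g : (Fin m → Fin N) → R) :
    (Fin (m + 1) → Fin N) → R :=
  fun σ => ∑ i : Fin (m + 1), (-1 : ℤ) ^ (i : ℕ) • g (σ ∘ i.succAbove)

/-- An `(m-1)`-dimensional cocycle: a cochain whose coboundary vanishes on all
ordered `(m+1)`-tuples forming simplices of `G`. -/
def IsCocycle (G : Set (Finset (Fin N))) (m : ℕ) {R : Type} [AddCommGroup R]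
    (f : (Fin m → Fin N) → R) : Prop :=
  IsCochain G m f ∧ ∀ σ : Fin (m + 1) → Fin N, OrdSimp G σ → delta f σ = 0

/-- `f` (a function on ordered `(m+1)`-tuples) is an `m`-dimensional coboundary:
on the ordered simplices of `G` it agrees with the coboundary of an
`(m-1)`-dimensional cochain. -/
def IsCobound (G : Set (Finset (Fin N))) (m : ℕ) {R : Type} [AddCommGroup R]
    (f : (Fin (m + 1) → Fin N) → R) : Prop :=
  ∃ g : (Fin m → Fin N) → R, IsCochain G m g ∧
    ∀ σ : Fin (m + 1) → Fin N, OrdSimp G σ → f σ = delta g σ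

/-- The support of a cochain: the unordered simplices on which it does not vanish. -/
def cochainSupport {R : Type} [AddCommGroup R] {m : ℕ} (f : (Fin m → Fin N) → R) :
    Set (Finset (Fin N)) :=
  {A | ∃ σ : Fin m → Fin N, Function.Injective σ ∧ Finset.image σ Finset.univ = A ∧ f σ ≠ 0}

/-- `H^j(G;R) = 0`: every `j`-cocycle is a `j`-coboundary. -/
def HTrivial (G : Set (Finset (Fin N))) (R : Type) [AddCommGroup R] (j : ℕ) : Prop :=
  ∀ f : (Fin (j + 1) → Fin N) → R, IsCocycle G (j + 1) f → IsCobound G j f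

/-- Topological connectedness (equivalently `H^0(G;R) = R`): any two vertices are
joined by a sequence of vertices in which consecutive vertices share a simplex. -/
def TopConnected (G : Set (Finset (Fin N))) : Prop :=
  ∀ u v : Fin N, Relation.ReflTransGen (fun x y => ∃ A ∈ G, x ∈ A ∧ y ∈ A) u v

/-- `R`-cohomological `j`-connectedness: `H^0(G;R) = R` and `H^i(G;R) = 0` for
all `1 ≤ i ≤ j`. -/
def CohomConnected (G : Set (Finset (Fin N))) (R : Type) [AddCommGroup R] (j : ℕ) : Prop :=
  TopConnected G ∧ ∀ i : ℕ, 1 ≤ i → i ≤ j → HTrivial G R i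

/-- `A` is a `j`-shell of `G`: a `(j+2)`-set all of whose `(j+1)`-subsets are
`j`-simplices of `G`. -/
def IsShell (G : Set (Finset (Fin N))) (j : ℕ) (A : Finset (Fin N)) : Prop :=
  A.card = j + 2 ∧ ∀ B ⊆ A, B.card = j + 1 → B ∈ G

/-- The `j`-flower in `K` with centre `C`: the petals `C ∪ {w}`, `w ∈ K \ C`. -/
def flower (K C : Finset (Fin N)) : Set (Finset (Fin N)) :=
  {P | ∃ w ∈ K, w ∉ C ∧ P = insert w C}

/-- `(K, C)` is a copy of `M_{j,k}` in `G`. -/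
def IsCopyM (G : Set (Finset (Fin N))) (j k : ℕ) (K C : Finset (Fin N)) : Prop :=
  K ∈ G ∧ K.card = k + 1 ∧ C ⊆ K ∧ C.card = j ∧
    (∀ σ ∈ G, (∃ w ∈ K, w ∉ C ∧ insert w C ⊆ σ) → σ ⊆ K) ∧
    (k = j → ∀ x ∈ C, ∀ y ∈ K, y ∉ C → x < y)

/-- `(K, C, w, a)` is a copy of `M̂_{j,k}` in `G`. -/
def IsCopyMhat (G : Set (Finset (Fin N))) (j k : ℕ) (K C : Finset (Fin N)) (w a : Fin N) :
    Prop :=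
  IsCopyM G j k K C ∧ w ∈ K ∧ w ∉ C ∧ a ∉ K ∧
    IsShell G j (insert a (insert w C)) ∧ (k = j → ∀ x ∈ K, x ≤ w)

/-- `G + B`: adding the set `B` together with its downward closure to `G`. -/
def addSet (G : Set (Finset (Fin N))) (B : Finset (Fin N)) : Set (Finset (Fin N)) :=
  G ∪ {A | A.Nonempty ∧ A ⊆ B}

/-- `J` is `K`-localised: every simplex of `G` containing `J` is contained in `K`. -/
def KLocalised (G : Set (Finset (Fin N))) (K J : Finset (Fin N)) : Prop :=
  ∀ σ ∈ G, J ⊆ σ → σ ⊆ K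

/-- A `k`-simplex `K` is a local `j`-obstacle: it contains at least `k - j + 1`
many `K`-localised `j`-simplices. -/
def LocalObstacle (G : Set (Finset (Fin N))) (j k : ℕ) (K : Finset (Fin N)) : Prop :=
  K ∈ G ∧ K.card = k + 1 ∧
    k - j + 1 ≤ {J : Finset (Fin N) | J ⊆ K ∧ J.card = j + 1 ∧ J ∈ G ∧ KLocalised G K J}.ncard

/-- The number of copies of `M_{j,k}` in `G`. -/
def countM (j k : ℕ) (G : Set (Finset (Fin N))) : ℕ :=
  Set.ncard {KC : Finset (Fin N) × Finset (Fin N) | IsCopyM G j k KC.1 KC.2}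

/-! ### The random model: independent uniform birth times -/

/-- The sample space: a birth time for each set of vertices. -/
abbrev Omega (n : ℕ) : Type := Finset (Fin n) → ℝ

/-- The probability measure: independent `Uniform[0,1]` birth times. -/
def P (n : ℕ) : Measure (Omega n) :=
  Measure.pi fun _ => volume.restrict (Set.Icc (0 : ℝ) 1)

/-- An event holds with high probability. -/
def WHP (E : (n : ℕ) → Set (Omega n)) : Prop :=
  Tendsto (fun n => P n (E n)) atTop (nhds 1)

/-- The random `d`-complex determined by birth times `ω`: all singletons together
with the downward closure of all sets `K` with `2 ≤ |K| ≤ d+1` whose birth time is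
at most `p (|K| - 1)`; i.e. the downward closure of the non-uniform binomial
random hypergraph `G(n,p)`. -/
def birthComplex (d n : ℕ) (p : ℕ → ℝ) (ω : Omega n) : Set (Finset (Fin n)) :=
  {A | A.Nonempty ∧ (A.card = 1 ∨ ∃ K : Finset (Fin n),
    A ⊆ K ∧ 2 ≤ K.card ∧ K.card ≤ d + 1 ∧ ω K ≤ p (K.card - 1))}

/-- The process `𝒢_τ = 𝒢(n, τ p̄)`: the complex of all simplices with scaled birth
time at most `τ`. -/
def Gproc (d : ℕ) (p : ℕ → ℕ → ℝ) (n : ℕ) (τ : ℝ) (ω : Omega n) : Set (Finset (Fin n)) :=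
  birthComplex d n (fun k => τ * p n k) ω

/-- `G` contains a copy of `M̂_{j,k}` for some `j ≤ k ≤ d`. -/
def ContainsMhat (d j : ℕ) {n : ℕ} (G : Set (Finset (Fin n))) : Prop :=
  ∃ k, j ≤ k ∧ k ≤ d ∧ ∃ K C : Finset (Fin n), ∃ w a : Fin n, IsCopyMhat G j k K C w a

/-- The hitting time `τ_j^*` for the disappearance of the last minimal obstruction. -/
def tstar (d j : ℕ) (p : ℕ → ℕ → ℝ) (n : ℕ) (ω : Omega n) : ℝ :=
  sSup {τ : ℝ | 0 ≤ τ ∧ ContainsMhat d j (Gproc d p n τ ω)}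

/-! ### Directions and their parameters -/

/-- A direction `p̄` together with its parametrisation `ᾱ, β̄, γ̄`
(`p k n` is `p̄_k(n)`, `β n k` is `β̄_k(n)`). -/
structure DirData where
  p : ℕ → ℕ → ℝ
  α : ℕ → ℝ
  β : ℕ → ℕ → ℝ
  γ : ℕ → ℝ

/-- `j`-admissibility of a direction (Definition 2.3). -/
def IsAdmissible (d j : ℕ) (D : DirData) : Prop :=
  (∀ n k, 0 ≤ D.p n k) ∧
  (∀ k, 1 ≤ k → k ≤ d → ∀ n : ℕ,
    D.p n k = (D.α k * Real.log n + D.β n k) / (n : ℝ) ^ ((k : ℝ) - (j : ℝ) + D.γ k)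
      * (Nat.factorial (k - j) : ℝ)) ∧
  (∀ k, 1 ≤ k → k ≤ d → (D.α k = 0 ∨ D.γ k = 0) ∧ 0 ≤ D.α k ∧ 0 ≤ D.γ k) ∧
  (∀ k, 1 ≤ k → k ≤ d → D.α k = 0 →
    (∀ n, D.β n k = 0) ∨ ((∀ n, 0 < D.β n k) ∧ ∀ ε : ℝ, 0 < ε →
      ((fun n => D.β n k) =o[atTop] fun n : ℕ => (n : ℝ) ^ ε) ∧
      ((fun n : ℕ => (n : ℝ) ^ (-ε)) =o[atTop] fun n => D.β n k))) ∧
  (∀ k, 1 ≤ k → k ≤ d → D.γ k = 0 →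
    (fun n => |D.β n k|) =o[atTop] fun n : ℕ => Real.log n) ∧
  (∃ k, j + 1 ≤ k ∧ k ≤ d ∧ 0 < D.α k)

/-- `λ_k`, computed from parameter functions. -/
def lamP (d j : ℕ) (α γ : ℕ → ℝ) (k : ℕ) : ℝ :=
  (j : ℝ) + 1 - γ k - ((k : ℝ) - (j : ℝ) + 1) * ∑ i ∈ Finset.Icc (j + 1) d, α i

/-- `μ_k`, computed from parameter functions. -/
def muP (d j : ℕ) (α : ℕ → ℝ) (β : ℕ → ℕ → ℝ) (γ : ℕ → ℝ) (p : ℕ → ℕ → ℝ)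
    (n k : ℕ) : ℝ :=
  -(((k : ℝ) - (j : ℝ) + 1) * ∑ i ∈ Finset.Icc (j + 1) d, β n i / (n : ℝ) ^ (γ i)) +
    (if 1 < p n k then 0
     else if α k ≠ 0 then Real.log (Real.log n)
     else Real.log (β n k))

/-- `ν_k`, computed from parameter functions. -/
def nuP (j : ℕ) (α : ℕ → ℝ) (k : ℕ) : ℝ :=
  if k = j then -Real.log (Nat.factorial (j + 1) : ℝ)
  else if α k ≠ 0 then
    -Real.log (Nat.factorial j : ℝ) - Real.log ((k : ℝ) - (j : ℝ) + 1) + Real.log (α k)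
  else -Real.log (Nat.factorial j : ℝ) - Real.log ((k : ℝ) - (j : ℝ) + 1)

def DirData.lam (D : DirData) (d j k : ℕ) : ℝ := lamP d j D.α D.γ k

def DirData.mu (D : DirData) (d j : ℕ) (n k : ℕ) : ℝ := muP d j D.α D.β D.γ D.p n k

def DirData.nu (D : DirData) (j k : ℕ) : ℝ := nuP j D.α k

/-- A `j`-critical direction (Definition 2.4). -/
def IsCriticalDirection (d j : ℕ) (D : DirData) : Prop :=
  IsAdmissible d j D ∧
  (∀ k, j ≤ k → k ≤ d → (∃ n, D.p n k ≠ 0) →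
    ∀ᶠ n : ℕ in atTop, D.lam d j k * Real.log n + D.mu d j n k + D.nu j k ≤ 0) ∧
  ∃ k, j ≤ k ∧ k ≤ d ∧
    ∀ᶠ n : ℕ in atTop, D.lam d j k * Real.log n + D.mu d j n k + D.nu j k = 0

/-- `k` is a critical dimension of the `j`-critical direction `D`. -/
def IsCriticalDim (d j : ℕ) (D : DirData) (k : ℕ) : Prop :=
  j ≤ k ∧ k ≤ d ∧ (∃ n, D.p n k ≠ 0) ∧ D.lam d j k = 0 ∧
    (fun n => D.mu d j n k) =O[atTop] fun _ : ℕ => (1 : ℝ)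

/-- The quantity `ℰ = exp(-c(j+1)) ∑_{k ∈ 𝒞} exp(μ̄_k + ν̄_k + c γ̄_k)`. -/
def Ecal (d j : ℕ) (D : DirData) (c : ℝ) (n : ℕ) : ℝ :=
  Real.exp (-(c * ((j : ℝ) + 1))) *
    ∑ k ∈ Finset.Icc j d,
      if IsCriticalDim d j D k then Real.exp (D.mu d j n k + D.nu j k + c * D.γ k) else 0

/-- `q̄ = ∏_{k=j+1}^d (1 - p̄_k)^{binom(n-j-1, k-j)}`. -/
def qbar (d j : ℕ) (D : DirData) (n : ℕ) : ℝ :=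
  ∏ k ∈ Finset.Icc (j + 1) d, (1 - D.p n k) ^ (Nat.choose (n - j - 1) (k - j))

end RSC

end
namespace RSC

section MWAux

variable {n : ℕ} {R : Type} [AddCommGroup R]

lemma mw_perm_smul {m : ℕ} (f : (Fin m → Fin n) → R)
    (hf : ∀ (σ : Fin m → Fin n) (a b : Fin m), a ≠ b → f (σ ∘ Equiv.swap a b) = -f σ)
    (π : Equiv.Perm (Fin m)) :
    ∀ σ : Fin m → Fin n, f (σ ∘ π) = (↑(Equiv.Perm.sign π) : ℤ) • f σ := by
  refine Equiv.Perm.swap_induction_on π (fun σ => by simp) (fun p x y hxy ih σ => ?_)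
  have hcomp : σ ∘ ⇑(Equiv.swap x y * p) = (σ ∘ ⇑(Equiv.swap x y)) ∘ ⇑p := rfl
  rw [hcomp, ih (σ ∘ ⇑(Equiv.swap x y)), hf σ x y hxy, smul_neg, map_mul,
    Equiv.Perm.sign_swap hxy]
  simp [neg_smul]

lemma mw_cons_succAbove {m : ℕ} (v : Fin n) (σ : Fin (m+1) → Fin n) (i : Fin (m+1)) :
    (Fin.cons v σ : Fin (m+2) → Fin n) ∘ (Fin.succ i).succAbove
      = Fin.cons v (σ ∘ i.succAbove) := by
  funext a
  induction a using Fin.cases with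
  | zero => simp
  | succ k => simp [Fin.succ_succAbove_succ]

lemma mw_delta_cons {m : ℕ} (f : (Fin (m+1) → Fin n) → R) (v : Fin n)
    (σ : Fin (m+1) → Fin n) :
    delta f (Fin.cons v σ) = f σ + delta (fun τ : Fin m → Fin n => -f (Fin.cons v τ)) σ := by
  unfold delta
  rw [Fin.sum_univ_succ]
  congr 1
  · have h0 : (Fin.cons v σ : Fin (m+2) → Fin n) ∘ Fin.succ = σ := by
      funext i; simp
    simp [h0]
  · refine Finset.sum_congr rfl fun i _ => ?_
    rw [mw_cons_succAbove]
    rw [Fin.val_succ, pow_succ, mul_comm, mul_smul]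
    simp

lemma mw_delta_cons_mem {m : ℕ} (f : (Fin (m+1) → Fin n) → R)
    (hf0 : ∀ σ : Fin (m+1) → Fin n, ¬ Function.Injective σ → f σ = 0)
    (halt : ∀ (σ : Fin (m+1) → Fin n) (a b : Fin (m+1)), a ≠ b →
      f (σ ∘ Equiv.swap a b) = -f σ)
    (v : Fin n) (σ : Fin (m+1) → Fin n) (k : Fin (m+1)) (hk : σ k = v) :
    delta f (Fin.cons v σ) = 0 := by
  rw [mw_delta_cons]
  have hmain : delta (fun τ : Fin m → Fin n => -f (Fin.cons v τ)) σ = -f σ := by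
    unfold delta
    rw [Finset.sum_eq_single_of_mem k (Finset.mem_univ k)]
    · show ((-1 : ℤ)) ^ (k : ℕ) • -f (Fin.cons v (σ ∘ k.succAbove)) = -f σ
      have hcyc : Fin.cons v (σ ∘ k.succAbove) = σ ∘ ⇑(k.cycleRange⁻¹) := by
        funext a
        induction a using Fin.cases with
        | zero =>
          have : (k.cycleRange)⁻¹ 0 = k := by
            rw [Equiv.Perm.inv_def, Equiv.symm_apply_eq, Fin.cycleRange_self]
          simp [this, hk]
        | succ l =>
          have : (k.cycleRange)⁻¹ l.succ = k.succAbove l := by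
            rw [Equiv.Perm.inv_def, Equiv.symm_apply_eq, Fin.cycleRange_succAbove]
          simp [this]
      rw [hcyc, mw_perm_smul f halt]
      rw [smul_neg, smul_smul]
      have hs : ((Equiv.Perm.sign (k.cycleRange⁻¹) : ℤˣ) : ℤ) = (-1) ^ (k : ℕ) := by
        simp
      rw [hs, ← pow_add]
      rw [Even.neg_one_pow ⟨(k : ℕ), rfl⟩, one_smul]
    · intro i _ hik
      obtain ⟨l, hl⟩ := Fin.exists_succAbove_eq (Ne.symm hik)
      have hnot : ¬ Function.Injective (Fin.cons v (σ ∘ i.succAbove) : Fin (m+1) → Fin n) := by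
        intro hinj
        have h0 : (Fin.cons v (σ ∘ i.succAbove) : Fin (m+1) → Fin n) 0
            = (Fin.cons v (σ ∘ i.succAbove) : Fin (m+1) → Fin n) l.succ := by
          rw [Fin.cons_zero, Fin.cons_succ]
          simp [hl, hk]
        exact (Fin.succ_ne_zero l).symm (hinj h0)
      simp [hf0 _ hnot]
  rw [hmain, add_neg_cancel]

lemma mw_image_cons {m : ℕ} (v : Fin n) (σ : Fin m → Fin n) :
    Finset.image (Fin.cons v σ : Fin (m+1) → Fin n) Finset.univ
      = insert v (Finset.image σ Finset.univ) := by
  ext b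
  simp only [Finset.mem_image, Finset.mem_insert, Finset.mem_univ, true_and]
  constructor
  · rintro ⟨i, hi⟩
    induction i using Fin.cases with
    | zero => left; simp at hi; exact hi.symm
    | succ k => right; exact ⟨k, by simpa using hi⟩
  · rintro (rfl | ⟨k, hk⟩)
    · exact ⟨0, by simp⟩
    · exact ⟨k.succ, by simpa using hk⟩

lemma mw_cons_injective {m : ℕ} (v : Fin n) (σ : Fin m → Fin n)
    (hσ : Function.Injective σ) (hv : ∀ i, σ i ≠ v) :
    Function.Injective (Fin.cons v σ : Fin (m+1) → Fin n) := by
  intro a b hab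
  induction a using Fin.cases with
  | zero =>
    induction b using Fin.cases with
    | zero => rfl
    | succ k => rw [Fin.cons_zero, Fin.cons_succ] at hab; exact absurd hab.symm (hv k)
  | succ k =>
    induction b using Fin.cases with
    | zero => rw [Fin.cons_zero, Fin.cons_succ] at hab; exact absurd hab (hv k)
    | succ l => rw [Fin.cons_succ, Fin.cons_succ] at hab; rw [hσ hab]

lemma mw_cons_swap {m : ℕ} (v : Fin n) (τ : Fin m → Fin n) (a b : Fin m) :
    Fin.cons v (τ ∘ ⇑(Equiv.swap a b)) =
      (Fin.cons v τ : Fin (m+1) → Fin n) ∘ ⇑(Equiv.swap a.succ b.succ) := by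
  funext x
  induction x using Fin.cases with
  | zero =>
    have h0 : Equiv.swap a.succ b.succ 0 = 0 :=
      Equiv.swap_apply_of_ne_of_ne (Fin.succ_ne_zero a).symm (Fin.succ_ne_zero b).symm
    simp [h0]
  | succ k =>
    have hs : Equiv.swap a.succ b.succ k.succ = (Equiv.swap a b k).succ := by
      rcases eq_or_ne k a with rfl | hka
      · rw [Equiv.swap_apply_left, Equiv.swap_apply_left]
      · rcases eq_or_ne k b with rfl | hkb
        · rw [Equiv.swap_apply_right, Equiv.swap_apply_right]
        · rw [Equiv.swap_apply_of_ne_of_ne hka hkb,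
            Equiv.swap_apply_of_ne_of_ne ((Fin.succ_injective m).ne hka)
              ((Fin.succ_injective m).ne hkb)]
    simp [hs]

end MWAux

/-- **Meshulam–Wallach expansion bound over an arbitrary abelian group**
(Proposition 5.7). Let `Δ` be the complete complex on `[n]` with `n ≥ j+2`, and let
`f` be a `j`-cochain of `Δ` whose support has minimal cardinality in its class
modulo coboundaries. Then `|D(f)| ≥ (n/(j+2)) |supp(f)|`. -/
theorem meshulam_wallach
    (j n : ℕ) (hj : 1 ≤ j) (hn : j + 2 ≤ n)
    (R : Type) [AddCommGroup R] [Nontrivial R]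
    (f : (Fin (j + 1) → Fin n) → R)
    (hf : IsCochain {A : Finset (Fin n) | A.Nonempty} (j + 1) f)
    (hmin : ∀ g : (Fin j → Fin n) → R,
      IsCochain {A : Finset (Fin n) | A.Nonempty} j g →
      (cochainSupport f).ncard ≤ (cochainSupport (f + delta g)).ncard) :
    ((n : ℝ) / ((j : ℝ) + 2)) * (cochainSupport f).ncard ≤
      ((cochainSupport (delta f)).ncard : ℝ) := by
  classical
  have hf0 : ∀ σ : Fin (j+1) → Fin n, ¬ Function.Injective σ → f σ = 0 :=
    fun σ hσ => hf.1 σ (fun h => hσ h.1)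
  set D := cochainSupport (delta f) with hD
  have hDfin : D.Finite := Set.toFinite _
  set D' := hDfin.toFinset with hD'
  have hcard : ∀ B ∈ D', B.card = j + 2 := by
    intro B hB
    rw [hD', Set.Finite.mem_toFinset] at hB
    obtain ⟨τ, hτinj, hτim, -⟩ := hB
    rw [← hτim, Finset.card_image_of_injective _ hτinj, Finset.card_univ, Fintype.card_fin]
  have hdeg : ∀ v : Fin n,
      (cochainSupport f).ncard ≤ (D'.filter (fun B => v ∈ B)).card := by
    intro v
    set g : (Fin j → Fin n) → R := fun τ => -f (Fin.cons v τ) with hg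
    have hgco : IsCochain {A : Finset (Fin n) | A.Nonempty} j g := by
      constructor
      · intro τ hτ
        have hτi : ¬ Function.Injective τ := by
          intro hi
          exact hτ ⟨hi, ⟨τ ⟨0, hj⟩, Finset.mem_image_of_mem _ (Finset.mem_univ _)⟩⟩
        have hcomp : (Fin.cons v τ : Fin (j+1) → Fin n) ∘ Fin.succ = τ := by
          funext i; simp
        have hnc : ¬ Function.Injective (Fin.cons v τ : Fin (j+1) → Fin n) := fun hc =>
          hτi (hcomp ▸ hc.comp (Fin.succ_injective j))
        simp [hg, hf0 _ hnc]
      · intro τ a b hab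
        show -f (Fin.cons v (τ ∘ ⇑(Equiv.swap a b))) = -(-f (Fin.cons v τ))
        rw [mw_cons_swap, hf.2 _ _ _ ((Fin.succ_injective j).ne hab)]
    have h1 := hmin g hgco
    have hkey : ∀ σ : Fin (j+1) → Fin n, (f + delta g) σ = delta f (Fin.cons v σ) := by
      intro σ
      rw [mw_delta_cons f v σ, Pi.add_apply, hg]
    have hnotin : ∀ A ∈ cochainSupport (f + delta g), v ∉ A := by
      rintro A ⟨σ, hσinj, rfl, hne⟩ hv
      rw [Finset.mem_image] at hv
      obtain ⟨k, -, hk⟩ := hv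
      exact hne (by rw [hkey σ]; exact mw_delta_cons_mem f hf0 hf.2 v σ k hk)
    have hmaps : ∀ A ∈ cochainSupport (f + delta g),
        insert v A ∈ {B | B ∈ D ∧ v ∈ B} := by
      intro A hA
      obtain ⟨σ, hσinj, hσim, hne⟩ := hA
      have hvA : v ∉ A := hnotin A ⟨σ, hσinj, hσim, hne⟩
      have hvσ : ∀ i, σ i ≠ v := by
        intro i hiv
        exact hvA (hσim ▸ (hiv ▸ Finset.mem_image_of_mem σ (Finset.mem_univ i)))
      refine ⟨⟨Fin.cons v σ, mw_cons_injective v σ hσinj hvσ, ?_, ?_⟩,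
        Finset.mem_insert_self v A⟩
      · rw [mw_image_cons, hσim]
      · rw [← hkey σ]; exact hne
    have hinj : Set.InjOn (fun A => insert v A) (cochainSupport (f + delta g)) := by
      intro A1 hA1 A2 hA2 h12
      have := congrArg (fun s => Finset.erase s v) h12
      simpa [Finset.erase_insert (hnotin A1 hA1), Finset.erase_insert (hnotin A2 hA2)]
        using this
    have h2 : (cochainSupport (f + delta g)).ncard ≤ {B | B ∈ D ∧ v ∈ B}.ncard :=
      Set.ncard_le_ncard_of_injOn _ hmaps hinj (Set.toFinite _)
    have h3 : {B | B ∈ D ∧ v ∈ B} = ↑(D'.filter (fun B => v ∈ B)) := by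
      ext B
      simp only [Finset.coe_filter, Set.Finite.mem_toFinset, Set.mem_setOf_eq, hD']
    rw [h3, Set.ncard_coe_finset] at h2
    exact h1.trans h2
  have hsum : ∑ v : Fin n, (D'.filter (fun B => v ∈ B)).card = (j+2) * D'.card := by
    calc ∑ v : Fin n, (D'.filter (fun B => v ∈ B)).card
        = ∑ v : Fin n, ∑ B ∈ D', (if v ∈ B then 1 else 0) := by
          exact Finset.sum_congr rfl fun v _ => Finset.card_filter _ _
      _ = ∑ B ∈ D', ∑ v : Fin n, (if v ∈ B then 1 else 0) := Finset.sum_comm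
      _ = ∑ B ∈ D', B.card := by
          refine Finset.sum_congr rfl fun B _ => ?_
          rw [Finset.sum_ite_mem, Finset.univ_inter, Finset.sum_const, smul_eq_mul, mul_one]
      _ = ∑ _B ∈ D', (j+2) := Finset.sum_congr rfl (fun B hB => hcard B hB)
      _ = (j+2) * D'.card := by rw [Finset.sum_const, smul_eq_mul, mul_comm]
  have main : n * (cochainSupport f).ncard ≤ (j+2) * D'.card := by
    calc n * (cochainSupport f).ncard
        = ∑ _v : Fin n, (cochainSupport f).ncard := by
          rw [Finset.sum_const, Finset.card_univ, Fintype.card_fin, smul_eq_mul]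
      _ ≤ ∑ v : Fin n, (D'.filter (fun B => v ∈ B)).card :=
          Finset.sum_le_sum (fun v _ => hdeg v)
      _ = (j+2) * D'.card := hsum
  have hDcard : D.ncard = D'.card := Set.ncard_eq_toFinset_card _ hDfin
  rw [div_mul_eq_mul_div, div_le_iff₀ (by positivity)]
  have hcast : ((n * (cochainSupport f).ncard : ℕ) : ℝ) ≤ (((j+2) * D'.card : ℕ) : ℝ) :=
    Nat.cast_le.2 main
  push_cast at hcast ⊢
  rw [hDcard]
  linarith

end RSC
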